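/- Let (π_t)_{t≥0} be a Markov–Feller stochastically continuous semigroup of probability kernels on a metric space X with (t,x) ↦ π_t(x,A) jointly measurable for every Borel A. For t > 0 and a Borel probability measure μ, let Q_t μ be the probability measure Q_t μ(A) = (1/t)∫_0^t P_s^*μ(A) ds. Then for every integer k ≥ 1 and all t_1,…,t_k > 0, lim_{T→∞} sup_{μ} ‖Q_T(Q_{t_k}(⋯(Q_{t_1}μ)⋯)) − Q_T μ‖_TV = 0, where the supremum is over all Borel probability measures μ on X. -/

import Mathlib

open MeasureTheory Filter Topology
open scoped ENNReal

/-- A Markov–Feller stochastically continuous semigroup of probability kernels on a metric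
space `X`. -/
structure MarkovFellerSemigroup {X : Type*} [MetricSpace X] [MeasurableSpace X] [BorelSpace X]
    (π : ℝ → X → Measure X) : Prop where
  prob : ∀ t, 0 ≤ t → ∀ x, IsProbabilityMeasure (π t x)
  meas : ∀ t, 0 ≤ t → ∀ A : Set X, MeasurableSet A → Measurable fun x => π t x A
  init : ∀ x, π 0 x = Measure.dirac x
  semigroup : ∀ t, 0 ≤ t → ∀ s, 0 ≤ s → ∀ x, ∀ A : Set X, MeasurableSet A →
    π (t + s) x A = ∫⁻ y, π s y A ∂(π t x)
  feller : ∀ t, 0 ≤ t → ∀ φ : BoundedContinuousFunction X ℝ,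
    Continuous fun x => ∫ y, φ y ∂(π t x)
  stochCont : ∀ φ : BoundedContinuousFunction X ℝ, ∀ x : X,
    Tendsto (fun t => ∫ y, φ y ∂(π t x)) (nhdsWithin 0 (Set.Ioi 0)) (nhds (φ x))

/-- The total variation norm `‖μ - ν‖_TV = (μ - ν)⁺(X) + (μ - ν)⁻(X)` of the difference of
two (finite) measures, via the Jordan-type variational characterisation
`(μ - ν)⁺(X) = sup_A (μ(A) - ν(A))`. -/
noncomputable def tvDist {X : Type*} [MeasurableSpace X] (μ ν : Measure X) : ℝ :=
  (⨆ A : {S : Set X // MeasurableSet S}, ((μ A.1).toReal - (ν A.1).toReal)) +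
  (⨆ A : {S : Set X // MeasurableSet S}, ((ν A.1).toReal - (μ A.1).toReal))

/-- The Cesàro average operator `Q_t μ (A) = (1/t) ∫₀ᵗ P_s^* μ (A) ds` on Borel
probability measures. -/
noncomputable def Qop {X : Type*} [MeasurableSpace X] (π : ℝ → X → Measure X)
    (t : ℝ) (μ : Measure X) : Measure X :=
  ((ENNReal.ofReal (1 / t)) • (volume.restrict (Set.Ioc (0:ℝ) t))).bind
    (fun s => μ.bind (π s))


section Aux

variable {X : Type*} [MetricSpace X] [MeasurableSpace X] [BorelSpace X]
  {π : ℝ → X → Measure X}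

/-- For every `s` (any sign), `π s` is a measurable family. -/
lemma measPi (hjoint : ∀ A : Set X, MeasurableSet A → Measurable fun q : ℝ × X => π q.1 q.2 A)
    (s : ℝ) : Measurable (π s) :=
  Measure.measurable_of_measurable_coe _ fun A hA =>
    (hjoint A hA).comp (measurable_const.prodMk measurable_id)

lemma measPiSet (hjoint : ∀ A : Set X, MeasurableSet A → Measurable fun q : ℝ × X => π q.1 q.2 A)
    (s : ℝ) {A : Set X} (hA : MeasurableSet A) : Measurable fun x => π s x A :=
  (hjoint A hA).comp (measurable_const.prodMk measurable_id)

lemma measBind (hjoint : ∀ A : Set X, MeasurableSet A → Measurable fun q : ℝ × X => π q.1 q.2 A)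
    (ρ : Measure X) [SFinite ρ] : Measurable fun s : ℝ => ρ.bind (π s) := by
  apply Measure.measurable_of_measurable_coe
  intro A hA
  have h : ∀ s : ℝ, (ρ.bind (π s)) A = ∫⁻ x, π s x A ∂ρ := fun s =>
    Measure.bind_apply hA (measPi hjoint s).aemeasurable
  simp only [h]
  exact (hjoint A hA).lintegral_prod_right'

lemma qop_apply (hjoint : ∀ A : Set X, MeasurableSet A → Measurable fun q : ℝ × X => π q.1 q.2 A)
    (t : ℝ) (μ : Measure X) [SFinite μ] {A : Set X} (hA : MeasurableSet A) :
    Qop π t μ A = ENNReal.ofReal (1/t) * ∫⁻ s in Set.Ioc (0:ℝ) t, (μ.bind (π s)) A := by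
  rw [Qop, Measure.bind_apply hA (measBind hjoint μ).aemeasurable, lintegral_smul_measure, smul_eq_mul]

lemma qop_lintegral
    (hjoint : ∀ A : Set X, MeasurableSet A → Measurable fun q : ℝ × X => π q.1 q.2 A)
    (t : ℝ) (μ : Measure X) [SFinite μ] {f : X → ℝ≥0∞} (hf : Measurable f) :
    ∫⁻ x, f x ∂(Qop π t μ) =
      ENNReal.ofReal (1/t) * ∫⁻ s in Set.Ioc (0:ℝ) t, ∫⁻ x, f x ∂(μ.bind (π s)) := by
  rw [Qop, Measure.lintegral_bind (measBind hjoint μ).aemeasurable hf.aemeasurable, lintegral_smul_measure,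
    smul_eq_mul]

lemma bind_prob (hMFS : MarkovFellerSemigroup π)
    (hjoint : ∀ A : Set X, MeasurableSet A → Measurable fun q : ℝ × X => π q.1 q.2 A)
    {s : ℝ} (hs : 0 ≤ s) (μ : Measure X) [IsProbabilityMeasure μ] :
    IsProbabilityMeasure (μ.bind (π s)) := by
  constructor
  rw [Measure.bind_apply MeasurableSet.univ (measPi hjoint s).aemeasurable]
  have h : ∀ x : X, π s x Set.univ = 1 := fun x => (hMFS.prob s hs x).measure_univ
  simp [h]

lemma qop_prob (hMFS : MarkovFellerSemigroup π)
    (hjoint : ∀ A : Set X, MeasurableSet A → Measurable fun q : ℝ × X => π q.1 q.2 A)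
    {t : ℝ} (ht : 0 < t) (μ : Measure X) [IsProbabilityMeasure μ] :
    IsProbabilityMeasure (Qop π t μ) := by
  constructor
  rw [qop_apply hjoint t μ MeasurableSet.univ]
  have h1 : ∀ s ∈ Set.Ioc (0:ℝ) t, (μ.bind (π s)) Set.univ = 1 := fun s hs =>
    (bind_prob hMFS hjoint hs.1.le μ).measure_univ
  have e2 : (1/t) * t = 1 := by field_simp
  rw [setLIntegral_congr_fun measurableSet_Ioc h1, setLIntegral_const, one_mul,
    Real.volume_Ioc, sub_zero, ← ENNReal.ofReal_mul (by positivity : (0:ℝ) ≤ 1/t), e2,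
    ENNReal.ofReal_one]

/-- Key one-sided estimates for a single Cesàro averaging step. -/
lemma key_step (hMFS : MarkovFellerSemigroup π)
    (hjoint : ∀ A : Set X, MeasurableSet A → Measurable fun q : ℝ × X => π q.1 q.2 A)
    {T t : ℝ} (hT : 0 < T) (ht : 0 < t) (ρ : Measure X) [IsProbabilityMeasure ρ]
    {A : Set X} (hA : MeasurableSet A) :
    Qop π T (Qop π t ρ) A ≤ Qop π T ρ A + ENNReal.ofReal (t/T) ∧
    Qop π T ρ A ≤ Qop π T (Qop π t ρ) A + ENNReal.ofReal (t/T) := by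
  haveI := qop_prob hMFS hjoint ht ρ
  set g : ℝ → ℝ≥0∞ := fun r => (ρ.bind (π r)) A with hgdef
  have hgm : Measurable g := by
    have h : ∀ s : ℝ, (ρ.bind (π s)) A = ∫⁻ x, π s x A ∂ρ := fun s =>
      Measure.bind_apply hA (measPi hjoint s).aemeasurable
    simp only [hgdef, h]
    exact (hjoint A hA).lintegral_prod_right'
  have hg1 : ∀ r : ℝ, 0 ≤ r → g r ≤ 1 := by
    intro r hr
    haveI := bind_prob hMFS hjoint hr ρ
    exact prob_le_one
  -- the double-integral representation
  have hrep : Qop π T (Qop π t ρ) A =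
      (ENNReal.ofReal (1/T) * ENNReal.ofReal (1/t)) *
        ∫⁻ u in Set.Ioc (0:ℝ) t, ∫⁻ s in Set.Ioc (0:ℝ) T, g (u + s) := by
    rw [qop_apply hjoint T _ hA]
    have hstep : ∀ s ∈ Set.Ioc (0:ℝ) T,
        ((Qop π t ρ).bind (π s)) A
          = ENNReal.ofReal (1/t) * ∫⁻ u in Set.Ioc (0:ℝ) t, g (u + s) := by
      intro s hs
      rw [Measure.bind_apply hA (measPi hjoint s).aemeasurable,
        qop_lintegral hjoint t ρ (measPiSet hjoint s hA)]
      congr 1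
      refine setLIntegral_congr_fun measurableSet_Ioc (fun u hu => ?_)
      rw [Measure.lintegral_bind (measPi hjoint u).aemeasurable (measPiSet hjoint s hA).aemeasurable]
      have : ∀ y : X, ∫⁻ x, π s x A ∂(π u y) = π (u + s) y A := fun y =>
        (hMFS.semigroup u hu.1.le s hs.1.le y A hA).symm
      simp only [this, hgdef]
      rw [Measure.bind_apply hA (measPi hjoint (u + s)).aemeasurable]
    rw [setLIntegral_congr_fun measurableSet_Ioc hstep]
    rw [lintegral_const_mul' _ _ ENNReal.ofReal_ne_top, ← mul_assoc]
    congr 1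
    exact lintegral_lintegral_swap (hgm.comp (measurable_snd.add measurable_fst)).aemeasurable
  -- translation identity
  have htrans : ∀ u : ℝ, ∫⁻ s in Set.Ioc (0:ℝ) T, g (u + s)
      = ∫⁻ r in Set.Ioc u (T + u), g r := by
    intro u
    rw [← MeasureTheory.MeasurePreserving.setLIntegral_comp_preimage_emb
      (measurePreserving_add_right volume u) (measurableEmbedding_addRight u) g]
    simp [Set.preimage_add_const_Ioc, add_comm]
  set J : ℝ≥0∞ := ∫⁻ r in Set.Ioc (0:ℝ) T, g r with hJ
  have hQρ : Qop π T ρ A = ENNReal.ofReal (1/T) * J := qop_apply hjoint T ρ hA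
  -- bounds on tail integrals
  have htail : ∀ a b : ℝ, 0 ≤ a → b - a ≤ t → ∫⁻ r in Set.Ioc a b, g r ≤ ENNReal.ofReal t := by
    intro a b ha hba
    calc ∫⁻ r in Set.Ioc a b, g r ≤ ∫⁻ _ in Set.Ioc a b, 1 := by
          refine setLIntegral_mono measurable_const (fun r hr => hg1 r (ha.trans hr.1.le))
      _ = volume (Set.Ioc a b) := by simp
      _ ≤ ENNReal.ofReal t := by
          rw [Real.volume_Ioc]; exact ENNReal.ofReal_le_ofReal hba
  have hIu_le : ∀ u ∈ Set.Ioc (0:ℝ) t,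
      (∫⁻ s in Set.Ioc (0:ℝ) T, g (u + s)) ≤ J + ENNReal.ofReal t := by
    intro u hu
    rw [htrans u]
    calc ∫⁻ r in Set.Ioc u (T + u), g r
        ≤ ∫⁻ r in Set.Ioc 0 T ∪ Set.Ioc T (T + u), g r := by
          refine lintegral_mono_set (fun r hr => ?_)
          rcases le_or_gt r T with h | h
          · exact Or.inl ⟨hu.1.trans hr.1, h⟩
          · exact Or.inr ⟨h, hr.2⟩
      _ ≤ J + ∫⁻ r in Set.Ioc T (T + u), g r := lintegral_union_le _ _ _
      _ ≤ J + ENNReal.ofReal t :=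
          add_le_add_right (htail T (T + u) hT.le (by linarith [hu.2])) J
  have hle_Iu : ∀ u ∈ Set.Ioc (0:ℝ) t,
      J ≤ (∫⁻ s in Set.Ioc (0:ℝ) T, g (u + s)) + ENNReal.ofReal t := by
    intro u hu
    rw [htrans u]
    calc J ≤ ∫⁻ r in Set.Ioc u (T + u) ∪ Set.Ioc 0 u, g r := by
          refine lintegral_mono_set (fun r hr => ?_)
          rcases le_or_gt r u with h | h
          · exact Or.inr ⟨hr.1, h⟩
          · exact Or.inl ⟨h, by linarith [hr.2, hu.1]⟩
      _ ≤ (∫⁻ r in Set.Ioc u (T + u), g r) + ∫⁻ r in Set.Ioc 0 u, g r :=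
          lintegral_union_le _ _ _
      _ ≤ _ := add_le_add_right (htail 0 u le_rfl (by linarith [hu.2])) _
  -- constants
  have e1 : ∀ a b : ℝ, 0 ≤ a → ENNReal.ofReal a * ENNReal.ofReal b = ENNReal.ofReal (a * b) :=
    fun a b ha => (ENNReal.ofReal_mul ha).symm
  have hconst : (ENNReal.ofReal (1/T) * ENNReal.ofReal (1/t)) *
      (ENNReal.ofReal t * volume (Set.Ioc (0:ℝ) t)) = ENNReal.ofReal (t/T) := by
    have har : (1/T) * (1/t) * (t * t) = t/T := by field_simp
    rw [Real.volume_Ioc, sub_zero, e1 (1/T) (1/t) (by positivity), e1 t t ht.le,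
      e1 (1/T * (1/t)) (t * t) (by positivity), har]
  have hconst2 : (ENNReal.ofReal (1/T) * ENNReal.ofReal (1/t)) * volume (Set.Ioc (0:ℝ) t)
      = ENNReal.ofReal (1/T) := by
    have e2 : (1/t) * t = 1 := by field_simp
    rw [Real.volume_Ioc, sub_zero, mul_assoc, e1 (1/t) t (by positivity), e2,
      ENNReal.ofReal_one, mul_one]
  have hImeas : Measurable fun u : ℝ => ∫⁻ s in Set.Ioc (0:ℝ) T, g (u + s) :=
    Measurable.lintegral_prod_right' (f := fun p : ℝ × ℝ => g (p.1 + p.2))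
      (hgm.comp (measurable_fst.add measurable_snd))
  constructor
  · rw [hrep, hQρ]
    calc (ENNReal.ofReal (1/T) * ENNReal.ofReal (1/t)) *
          ∫⁻ u in Set.Ioc (0:ℝ) t, ∫⁻ s in Set.Ioc (0:ℝ) T, g (u + s)
        ≤ (ENNReal.ofReal (1/T) * ENNReal.ofReal (1/t)) *
          ∫⁻ _ in Set.Ioc (0:ℝ) t, (J + ENNReal.ofReal t) :=
          mul_le_mul_right (setLIntegral_mono measurable_const hIu_le) _
      _ = ENNReal.ofReal (1/T) * J + ENNReal.ofReal (t/T) := by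
          rw [setLIntegral_const]
          calc (ENNReal.ofReal (1/T) * ENNReal.ofReal (1/t)) *
                ((J + ENNReal.ofReal t) * volume (Set.Ioc (0:ℝ) t))
              = (ENNReal.ofReal (1/T) * ENNReal.ofReal (1/t) * volume (Set.Ioc (0:ℝ) t)) * J
                + ENNReal.ofReal (1/T) * ENNReal.ofReal (1/t) *
                  (ENNReal.ofReal t * volume (Set.Ioc (0:ℝ) t)) := by ring
            _ = _ := by rw [hconst2, hconst]
  · rw [hrep, hQρ]
    have h1 : ENNReal.ofReal (1/T) * J = (ENNReal.ofReal (1/T) * ENNReal.ofReal (1/t)) *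
        ∫⁻ _ in Set.Ioc (0:ℝ) t, J := by
      rw [setLIntegral_const]
      calc ENNReal.ofReal (1/T) * J
          = (ENNReal.ofReal (1/T) * ENNReal.ofReal (1/t) * volume (Set.Ioc (0:ℝ) t)) * J := by
            rw [hconst2]
        _ = _ := by ring
    rw [h1]
    calc (ENNReal.ofReal (1/T) * ENNReal.ofReal (1/t)) * ∫⁻ _ in Set.Ioc (0:ℝ) t, J
        ≤ (ENNReal.ofReal (1/T) * ENNReal.ofReal (1/t)) *
          ∫⁻ u in Set.Ioc (0:ℝ) t, ((∫⁻ s in Set.Ioc (0:ℝ) T, g (u + s)) + ENNReal.ofReal t) :=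
          mul_le_mul_right (setLIntegral_mono (hImeas.add measurable_const) hle_Iu) _
      _ = (ENNReal.ofReal (1/T) * ENNReal.ofReal (1/t)) *
          ((∫⁻ u in Set.Ioc (0:ℝ) t, ∫⁻ s in Set.Ioc (0:ℝ) T, g (u + s))
            + ENNReal.ofReal t * volume (Set.Ioc (0:ℝ) t)) := by
          rw [lintegral_add_right _ measurable_const, setLIntegral_const]
      _ = _ := by rw [mul_add, hconst]

lemma fold_prob (hMFS : MarkovFellerSemigroup π)
    (hjoint : ∀ A : Set X, MeasurableSet A → Measurable fun q : ℝ × X => π q.1 q.2 A) :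
    ∀ (ts : List ℝ), (∀ t ∈ ts, 0 < t) → ∀ (μ : Measure X), IsProbabilityMeasure μ →
      IsProbabilityMeasure (ts.foldl (fun ν s => Qop π s ν) μ) := by
  intro ts
  induction ts with
  | nil => intro _ μ hμ; simpa using hμ
  | cons t ts ih =>
    intro hpos μ hμ
    haveI := hμ
    haveI := qop_prob hMFS hjoint (hpos t List.mem_cons_self) μ
    simpa using ih (fun s hs => hpos s (List.mem_cons_of_mem t hs)) (Qop π t μ) inferInstance

lemma fold_bound (hMFS : MarkovFellerSemigroup π)
    (hjoint : ∀ A : Set X, MeasurableSet A → Measurable fun q : ℝ × X => π q.1 q.2 A)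
    {T : ℝ} (hT : 0 < T) :
    ∀ (ts : List ℝ), (∀ t ∈ ts, 0 < t) → ∀ (μ : Measure X), IsProbabilityMeasure μ →
      ∀ A : Set X, MeasurableSet A →
      Qop π T (ts.foldl (fun ν s => Qop π s ν) μ) A
        ≤ Qop π T μ A + ENNReal.ofReal (ts.sum / T) ∧
      Qop π T μ A ≤ Qop π T (ts.foldl (fun ν s => Qop π s ν) μ) A
        + ENNReal.ofReal (ts.sum / T) := by
  intro ts
  induction ts with
  | nil => intro _ μ hμ A hA; simp
  | cons t ts ih =>
    intro hpos μ hμ A hA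
    haveI := hμ
    have ht : 0 < t := hpos t List.mem_cons_self
    haveI := qop_prob hMFS hjoint ht μ
    have IH := ih (fun s hs => hpos s (List.mem_cons_of_mem t hs)) (Qop π t μ)
      inferInstance A hA
    have key := key_step hMFS hjoint hT ht μ hA
    have hsum : 0 ≤ ts.sum := List.sum_nonneg (fun s hs => (hpos s (List.mem_cons_of_mem t hs)).le)
    have hadd : ENNReal.ofReal (ts.sum / T) + ENNReal.ofReal (t / T)
        = ENNReal.ofReal ((t :: ts).sum / T) := by
      rw [← ENNReal.ofReal_add (by positivity) (by positivity), List.sum_cons, add_div]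
      ring_nf
    constructor
    · calc Qop π T ((t :: ts).foldl (fun ν s => Qop π s ν) μ) A
          = Qop π T (ts.foldl (fun ν s => Qop π s ν) (Qop π t μ)) A := by simp
        _ ≤ Qop π T (Qop π t μ) A + ENNReal.ofReal (ts.sum / T) := IH.1
        _ ≤ (Qop π T μ A + ENNReal.ofReal (t / T)) + ENNReal.ofReal (ts.sum / T) :=
            add_le_add_left key.1 _
        _ = Qop π T μ A + ENNReal.ofReal ((t :: ts).sum / T) := by
            rw [add_assoc, add_comm (ENNReal.ofReal (t / T)), hadd]
    · calc Qop π T μ A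
          ≤ Qop π T (Qop π t μ) A + ENNReal.ofReal (t / T) := key.2
        _ ≤ (Qop π T (ts.foldl (fun ν s => Qop π s ν) (Qop π t μ)) A
              + ENNReal.ofReal (ts.sum / T)) + ENNReal.ofReal (t / T) :=
            add_le_add_left IH.2 _
        _ = Qop π T ((t :: ts).foldl (fun ν s => Qop π s ν) μ) A
              + ENNReal.ofReal ((t :: ts).sum / T) := by
            rw [add_assoc, hadd]; simp

end Aux

theorem tv_cesaro_composition_tendsto_zero
    {X : Type*} [MetricSpace X] [MeasurableSpace X] [BorelSpace X]
    (π : ℝ → X → Measure X) (hMFS : MarkovFellerSemigroup π)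
    (hjoint : ∀ A : Set X, MeasurableSet A → Measurable fun q : ℝ × X => π q.1 q.2 A)
    (ts : List ℝ) (hne : ts ≠ []) (hpos : ∀ t ∈ ts, 0 < t) :
    ∀ ε : ℝ, 0 < ε → ∀ᶠ T in (atTop : Filter ℝ), ∀ μ : Measure X, IsProbabilityMeasure μ →
      tvDist (Qop π T (ts.foldl (fun ν s => Qop π s ν) μ)) (Qop π T μ) < ε := by
  intro ε hε
  set S := ts.sum with hSdef
  have hS : 0 ≤ S := List.sum_nonneg (fun s hs => (hpos s hs).le)
  filter_upwards [eventually_gt_atTop (max 0 (2 * (S + 1) / ε))] with T hT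
  have hT0 : 0 < T := lt_of_le_of_lt (le_max_left _ _) hT
  have hTS : 2 * (S + 1) / ε < T := lt_of_le_of_lt (le_max_right _ _) hT
  intro μ hμ
  haveI := hμ
  set ν := ts.foldl (fun ν s => Qop π s ν) μ with hν
  haveI : IsProbabilityMeasure ν := fold_prob hMFS hjoint ts hpos μ hμ
  haveI : IsProbabilityMeasure (Qop π T μ) := qop_prob hMFS hjoint hT0 μ
  haveI : IsProbabilityMeasure (Qop π T ν) := qop_prob hMFS hjoint hT0 ν
  have hbd := fold_bound hMFS hjoint hT0 ts hpos μ hμ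
  haveI : Nonempty {A : Set X // MeasurableSet A} := ⟨⟨∅, MeasurableSet.empty⟩⟩
  have hST : 0 ≤ S / T := by positivity
  have hreal : ∀ a b : ℝ≥0∞, a ≠ ⊤ → b ≠ ⊤ → a ≤ b + ENNReal.ofReal (S / T) →
      a.toReal - b.toReal ≤ S / T := by
    intro a b ha hb h
    have h2 := ENNReal.toReal_mono (by finiteness) h
    rw [ENNReal.toReal_add hb ENNReal.ofReal_ne_top, ENNReal.toReal_ofReal hST] at h2
    linarith
  have h1 : (⨆ A : {A : Set X // MeasurableSet A},
      ((Qop π T ν A.1).toReal - (Qop π T μ A.1).toReal)) ≤ S / T := by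
    refine ciSup_le fun A => hreal _ _ (measure_ne_top _ _) (measure_ne_top _ _) ?_
    exact (hbd A.1 A.2).1
  have h2 : (⨆ A : {A : Set X // MeasurableSet A},
      ((Qop π T μ A.1).toReal - (Qop π T ν A.1).toReal)) ≤ S / T := by
    refine ciSup_le fun A => hreal _ _ (measure_ne_top _ _) (measure_ne_top _ _) ?_
    exact (hbd A.1 A.2).2
  have hlt : S / T + S / T < ε := by
    rw [← add_div, div_lt_iff₀ hT0]
    have h3 : 2 * (S + 1) < ε * T := by
      rw [div_lt_iff₀ hε] at hTS; linarith
    linarith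
  calc tvDist (Qop π T ν) (Qop π T μ)
      ≤ S / T + S / T := add_le_add h1 h2
    _ < ε := hlt
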